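/- Under the standing assumptions (T spherical, a ∈ T*, the solution to Eq(T,a) separated, Γ̂ ≠ ∅, P = (α,β) the minimal point of the closure of Γ̂, and P an interior point of Σ), there exists δ > 0 such that π(X) = 1 for every X ∈ Γ with |X − P| < δ that lies in one of the four open sectors C₃₁ = {(α',β') : β' > β, α'+β' < α+β}, C₂₁ = {(α',β') : α' < α, β' < β}, C₂₃ = {(α',β') : α' > α, α'+β' < α+β}, C₁₃ = {(α',β') : β' < β, α'+β' > α+β}. -/

import Mathlib

open Function Set

variable {R C S : Type*} [DecidableEq R] [DecidableEq C] [DecidableEq S]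

/-- Conditions (R1)-(R3) of a latin bitrade: `star` and `tri` are disjoint, and for every
triple in one set and every pair of coordinates there is exactly one triple of the other
set agreeing in those two coordinates. -/
structure IsLatinBitrade (star tri : Finset (R × C × S)) : Prop where
  disj : Disjoint star tri
  r2a : ∀ p ∈ star, ∃! q, q ∈ tri ∧ q.1 = p.1 ∧ q.2.1 = p.2.1
  r2b : ∀ p ∈ star, ∃! q, q ∈ tri ∧ q.1 = p.1 ∧ q.2.2 = p.2.2
  r2c : ∀ p ∈ star, ∃! q, q ∈ tri ∧ q.2.1 = p.2.1 ∧ q.2.2 = p.2.2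
  r3a : ∀ q ∈ tri, ∃! p, p ∈ star ∧ p.1 = q.1 ∧ p.2.1 = q.2.1
  r3b : ∀ q ∈ tri, ∃! p, p ∈ star ∧ p.1 = q.1 ∧ p.2.2 = q.2.2
  r3c : ∀ q ∈ tri, ∃! p, p ∈ star ∧ p.2.1 = q.2.1 ∧ p.2.2 = q.2.2

/-- A latin bitrade is indecomposable if it is not the disjoint union of two
nonempty latin bitrades. -/
def BitradeIndecomposable (star tri : Finset (R × C × S)) : Prop :=
  ¬ ∃ s₁ t₁ s₂ t₂ : Finset (R × C × S),
      s₁.Nonempty ∧ s₂.Nonempty ∧ Disjoint s₁ s₂ ∧ Disjoint t₁ t₂ ∧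
      s₁ ∪ s₂ = star ∧ t₁ ∪ t₂ = tri ∧
      IsLatinBitrade s₁ t₁ ∧ IsLatinBitrade s₂ t₂

/-- An indecomposable latin bitrade is spherical if `m = s + 2`, where `m` is the total
number of occurring rows, columns and symbols and `s` is the size. -/
def IsSphericalBitrade (star tri : Finset (R × C × S)) : Prop :=
  IsLatinBitrade star tri ∧ BitradeIndecomposable star tri ∧
    (star.image Prod.fst).card + (star.image fun p => p.2.1).card +
      (star.image fun p => p.2.2).card = star.card + 2

/-- `(f1, f2, f3)` is a (rational) solution of the linear system `Eq(T,a)`: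
`a₁ = 0`, `a₂ = 0`, `a₃ = 1`, and `b₁ + b₂ = b₃` for every `b ∈ T* \ {a}`. -/
def IsEqSolution (star : Finset (R × C × S)) (a : R × C × S)
    (f1 : R → ℚ) (f2 : C → ℚ) (f3 : S → ℚ) : Prop :=
  f1 a.1 = 0 ∧ f2 a.2.1 = 0 ∧ f3 a.2.2 = 1 ∧
    ∀ b ∈ star, b ≠ a → f1 b.1 + f2 b.2.1 = f3 b.2.2

/-- The solution is separated: two rows (columns, symbols) receiving the same value coincide. -/
def SeparatedSolution (star : Finset (R × C × S))
    (f1 : R → ℚ) (f2 : C → ℚ) (f3 : S → ℚ) : Prop :=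
  ∀ b ∈ star, ∀ d ∈ star,
    (f1 b.1 = f1 d.1 → b.1 = d.1) ∧ (f2 b.2.1 = f2 d.2.1 → b.2.1 = d.2.1) ∧
      (f3 b.2.2 = f3 d.2.2 → b.2.2 = d.2.2)

/-- The triangle `Σ = {(x,y) : 0 ≤ x, 0 ≤ y, x + y ≤ 1}`. -/
def SigmaT : Set (ℝ × ℝ) := {p | 0 ≤ p.1 ∧ 0 ≤ p.2 ∧ p.1 + p.2 ≤ 1}

/-- The (closed) triangle bounded by the lines `y = r1`, `x = r2` and `x + y = r3`.
If `r1 + r2 = r3` this set degenerates to the single point `(r2, r1)`. -/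
def DeltaT (r1 r2 r3 : ℚ) : Set (ℝ × ℝ) :=
  {p | ((r1 : ℝ) ≤ p.2 ∧ (r2 : ℝ) ≤ p.1 ∧ p.1 + p.2 ≤ (r3 : ℝ)) ∨
       (p.2 ≤ (r1 : ℝ) ∧ p.1 ≤ (r2 : ℝ) ∧ (r3 : ℝ) ≤ p.1 + p.2)}

/-- The triangle bounded by `y = r1`, `x = r2`, `x + y = r3` degenerates:
the three lines meet in a single point. -/
def DeltaDegenerate (r1 r2 r3 : ℚ) : Prop := r1 + r2 = r3

/-- The three pairwise intersection points of the lines `y = r1`, `x = r2`, `x + y = r3`,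
i.e. the vertices of the triangle they bound. -/
def DeltaVerts (r1 r2 r3 : ℚ) : Set (ℝ × ℝ) :=
  {((r2 : ℝ), (r1 : ℝ)), ((r3 : ℝ) - (r1 : ℝ), (r1 : ℝ)), ((r2 : ℝ), (r3 : ℝ) - (r2 : ℝ))}

/-- The horizontal side (upon the line `y = r1`) of the triangle bounded by
`y = r1`, `x = r2`, `x + y = r3`. -/
def sideH (r1 r2 r3 : ℚ) : Set (ℝ × ℝ) :=
  segment ℝ ((r2 : ℝ), (r1 : ℝ)) ((r3 : ℝ) - (r1 : ℝ), (r1 : ℝ))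

/-- The vertical side (upon the line `x = r2`). -/
def sideV (r1 r2 r3 : ℚ) : Set (ℝ × ℝ) :=
  segment ℝ ((r2 : ℝ), (r1 : ℝ)) ((r2 : ℝ), (r3 : ℝ) - (r2 : ℝ))

/-- The diagonal side (upon the line `x + y = r3`). -/
def sideD (r1 r2 r3 : ℚ) : Set (ℝ × ℝ) :=
  segment ℝ ((r3 : ℝ) - (r1 : ℝ), (r1 : ℝ)) ((r2 : ℝ), (r3 : ℝ) - (r2 : ℝ))

/-- The triangle `Δ(c,a)` associated with a triple `c` and the solution `(f1,f2,f3)`. -/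
def DeltaOf (f1 : R → ℚ) (f2 : C → ℚ) (f3 : S → ℚ) (c : R × C × S) : Set (ℝ × ℝ) :=
  DeltaT (f1 c.1) (f2 c.2.1) (f3 c.2.2)

/-- `Π`: the union of all sides of the triangles `Δ(c,a)`, `c ∈ T△`. -/
def PiSet (tri : Finset (R × C × S)) (f1 : R → ℚ) (f2 : C → ℚ) (f3 : S → ℚ) :
    Set (ℝ × ℝ) :=
  ⋃ c ∈ tri, (sideH (f1 c.1) (f2 c.2.1) (f3 c.2.2) ∪
    sideV (f1 c.1) (f2 c.2.1) (f3 c.2.2) ∪ sideD (f1 c.1) (f2 c.2.1) (f3 c.2.2))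

/-- `Γ = Int(Σ) \ Π`. -/
def GammaSet (tri : Finset (R × C × S)) (f1 : R → ℚ) (f2 : C → ℚ) (f3 : S → ℚ) :
    Set (ℝ × ℝ) :=
  interior SigmaT \ PiSet tri f1 f2 f3

/-- `π(X)`: the number of triples `c ∈ T△` such that `X` lies in the interior of `Δ(c,a)`. -/
noncomputable def piCount (tri : Finset (R × C × S))
    (f1 : R → ℚ) (f2 : C → ℚ) (f3 : S → ℚ) (X : ℝ × ℝ) : ℕ :=
  {c : R × C × S | c ∈ tri ∧ X ∈ interior (DeltaOf f1 f2 f3 c)}.ncard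

/-- `Γ̂ = {X ∈ Γ : π(X) ≠ 1}`. -/
def GammaHat (tri : Finset (R × C × S)) (f1 : R → ℚ) (f2 : C → ℚ) (f3 : S → ℚ) :
    Set (ℝ × ℝ) :=
  {X ∈ GammaSet tri f1 f2 f3 | piCount tri f1 f2 f3 X ≠ 1}

/-- The order used to choose the minimal point `P`: `(α,β)` precedes `(α',β')` iff
`α+β < α'+β'`, or `α+β = α'+β'` and `β < β'`. -/
def ptOrder (p q : ℝ × ℝ) : Prop :=
  p.1 + p.2 < q.1 + q.2 ∨ (p.1 + p.2 = q.1 + q.2 ∧ p.2 < q.2)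


section AuxLemmas

lemma seg_snd' {p q x : ℝ × ℝ} {r : ℝ} (hp : p.2 = r) (hq : q.2 = r)
    (hx : x ∈ segment ℝ p q) : x.2 = r := by
  obtain ⟨a, b, ha, hb, hab, rfl⟩ := hx
  simp only [Prod.snd_add, Prod.smul_snd, smul_eq_mul, hp, hq]
  rw [← add_mul, hab, one_mul]

lemma seg_fst' {p q x : ℝ × ℝ} {r : ℝ} (hp : p.1 = r) (hq : q.1 = r)
    (hx : x ∈ segment ℝ p q) : x.1 = r := by
  obtain ⟨a, b, ha, hb, hab, rfl⟩ := hx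
  simp only [Prod.fst_add, Prod.smul_fst, smul_eq_mul, hp, hq]
  rw [← add_mul, hab, one_mul]

lemma seg_sum' {p q x : ℝ × ℝ} {r : ℝ} (hp : p.1 + p.2 = r) (hq : q.1 + q.2 = r)
    (hx : x ∈ segment ℝ p q) : x.1 + x.2 = r := by
  obtain ⟨a, b, ha, hb, hab, rfl⟩ := hx
  simp only [Prod.fst_add, Prod.snd_add, Prod.smul_fst, Prod.smul_snd, smul_eq_mul]
  linear_combination a*hp + b*hq + r*hab

lemma DeltaT_closed (r1 r2 r3 : ℚ) : IsClosed (DeltaT r1 r2 r3) := by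
  have h1 : IsClosed {p : ℝ × ℝ | (r1 : ℝ) ≤ p.2 ∧ (r2 : ℝ) ≤ p.1 ∧ p.1 + p.2 ≤ (r3 : ℝ)} :=
    ((isClosed_le continuous_const continuous_snd).inter
      ((isClosed_le continuous_const continuous_fst).inter
        (isClosed_le (continuous_fst.add continuous_snd) continuous_const)))
  have h2 : IsClosed {p : ℝ × ℝ | p.2 ≤ (r1 : ℝ) ∧ p.1 ≤ (r2 : ℝ) ∧ (r3 : ℝ) ≤ p.1 + p.2} :=
    ((isClosed_le continuous_snd continuous_const).inter
      ((isClosed_le continuous_fst continuous_const).inter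
        (isClosed_le continuous_const (continuous_fst.add continuous_snd))))
  exact h1.union h2

lemma mem_interior_DeltaT {r1 r2 r3 : ℚ} {x : ℝ × ℝ}
    (h1 : x.2 ≠ (r1 : ℝ)) (h2 : x.1 ≠ (r2 : ℝ)) (h3 : x.1 + x.2 ≠ (r3 : ℝ))
    (hx : x ∈ DeltaT r1 r2 r3) : x ∈ interior (DeltaT r1 r2 r3) := by
  rcases hx with ⟨hA, hB, hC⟩ | ⟨hA, hB, hC⟩
  · refine interior_maximal (fun p hp => Or.inl ⟨hp.1.le, hp.2.1.le, hp.2.2.le⟩)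
      (((isOpen_lt continuous_const continuous_snd).inter
        ((isOpen_lt continuous_const continuous_fst).inter
          (isOpen_lt (continuous_fst.add continuous_snd) continuous_const))) :
        IsOpen {p : ℝ × ℝ | (r1 : ℝ) < p.2 ∧ (r2 : ℝ) < p.1 ∧ p.1 + p.2 < (r3 : ℝ)})
      ⟨lt_of_le_of_ne hA (Ne.symm h1), lt_of_le_of_ne hB (Ne.symm h2), lt_of_le_of_ne hC h3⟩
  · refine interior_maximal (fun p hp => Or.inr ⟨hp.1.le, hp.2.1.le, hp.2.2.le⟩)
      (((isOpen_lt continuous_snd continuous_const).inter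
        ((isOpen_lt continuous_fst continuous_const).inter
          (isOpen_lt continuous_const (continuous_fst.add continuous_snd)))) :
        IsOpen {p : ℝ × ℝ | p.2 < (r1 : ℝ) ∧ p.1 < (r2 : ℝ) ∧ (r3 : ℝ) < p.1 + p.2})
      ⟨lt_of_le_of_ne hA h1, lt_of_le_of_ne hB h2, lt_of_le_of_ne hC (Ne.symm h3)⟩

end AuxLemmas

/-- **Lemma 3.4.** Near the minimal point `P = (α,β)` (an interior point of `Σ`),
`π(X) = 1` holds on the four sectors `C₃₁`, `C₂₁`, `C₂₃`, `C₁₃`. -/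
theorem stmt6 (star tri : Finset (R × C × S)) (hsph : IsSphericalBitrade star tri)
    (a : R × C × S) (ha : a ∈ star)
    (f1 : R → ℚ) (f2 : C → ℚ) (f3 : S → ℚ)
    (hsol : IsEqSolution star a f1 f2 f3)
    (hsep : SeparatedSolution star f1 f2 f3)
    (hne : (GammaHat tri f1 f2 f3).Nonempty)
    (P : ℝ × ℝ)
    (hP : P ∈ closure (GammaHat tri f1 f2 f3))
    (hPmin : ∀ Q ∈ closure (GammaHat tri f1 f2 f3), Q ≠ P → ptOrder P Q)
    (hPint : P ∈ interior SigmaT) :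
    ∃ δ : ℝ, 0 < δ ∧ ∀ X ∈ GammaSet tri f1 f2 f3, dist X P < δ →
      ((X.2 > P.2 ∧ X.1 + X.2 < P.1 + P.2) ∨       -- C₃₁
       (X.1 < P.1 ∧ X.2 < P.2) ∨                   -- C₂₁
       (X.1 > P.1 ∧ X.1 + X.2 < P.1 + P.2) ∨       -- C₂₃
       (X.2 < P.2 ∧ X.1 + X.2 > P.1 + P.2)) →      -- C₁₃
      piCount tri f1 f2 f3 X = 1 := by
  classical
  obtain ⟨ε₁, hε₁pos, hball⟩ := Metric.isOpen_iff.mp isOpen_interior P hPint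
  set d : R × C × S → ℝ := fun c =>
    min (if (f1 c.1 : ℝ) = P.2 then 1 else |(f1 c.1 : ℝ) - P.2|)
      (min (if (f2 c.2.1 : ℝ) = P.1 then 1 else |(f2 c.2.1 : ℝ) - P.1|)
        (if (f3 c.2.2 : ℝ) = P.1 + P.2 then 1
          else |(f3 c.2.2 : ℝ) - (P.1 + P.2)| / 2)) with hd
  have hdpos : ∀ c, 0 < d c := by
    intro c
    refine lt_min ?_ (lt_min ?_ ?_)
    · split_ifs with h
      · norm_num
      · exact abs_pos.mpr (sub_ne_zero.mpr h)
    · split_ifs with h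
      · norm_num
      · exact abs_pos.mpr (sub_ne_zero.mpr h)
    · split_ifs with h
      · norm_num
      · have := abs_pos.mpr (sub_ne_zero.mpr h)
        linarith
  set δ₂ : ℝ := if h : tri.Nonempty then tri.inf' h d else 1 with hδ₂
  have hδ₂pos : 0 < δ₂ := by
    by_cases h : tri.Nonempty
    · rw [hδ₂, dif_pos h]
      exact (Finset.lt_inf'_iff h).mpr fun c _ => hdpos c
    · rw [hδ₂, dif_neg h]; norm_num
  have hδ₂le : ∀ c ∈ tri, δ₂ ≤ d c := by
    intro c hc
    have h : tri.Nonempty := ⟨c, hc⟩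
    rw [hδ₂, dif_pos h]
    exact Finset.inf'_le d hc
  set δ : ℝ := min ε₁ δ₂ with hδdef
  have hδpos : 0 < δ := lt_min hε₁pos hδ₂pos
  refine ⟨δ, hδpos, ?_⟩
  intro X hXΓ hXd hsec
  by_contra hπ
  have hXhat : X ∈ GammaHat tri f1 f2 f3 := ⟨hXΓ, hπ⟩
  rcases hsec with h31 | h21 | h23 | h13
  · -- C₃₁ : X.2 > P.2 ∧ sum X < sum P
    have hXP : X ≠ P := fun h => by rw [h] at h31; exact lt_irrefl _ h31.2
    have hmin := hPmin X (subset_closure hXhat) hXP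
    unfold ptOrder at hmin
    rcases hmin with h | ⟨h, h'⟩ <;> linarith [h31.1, h31.2]
  · have hXP : X ≠ P := fun h => by rw [h] at h21; exact lt_irrefl _ h21.1
    have hmin := hPmin X (subset_closure hXhat) hXP
    unfold ptOrder at hmin
    rcases hmin with h | ⟨h, h'⟩ <;> linarith [h21.1, h21.2]
  · have hXP : X ≠ P := fun h => by rw [h] at h23; exact lt_irrefl _ h23.1
    have hmin := hPmin X (subset_closure hXhat) hXP
    unfold ptOrder at hmin
    rcases hmin with h | ⟨h, h'⟩ <;> linarith [h23.1, h23.2]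
  · -- C₁₃ : X.2 < P.2 ∧ sum X > sum P
    set U : Set (ℝ × ℝ) :=
      {Y | Y.2 < P.2 ∧ P.1 + P.2 < Y.1 + Y.2 ∧ dist Y P < δ} with hU
    have hXU : X ∈ U := ⟨h13.1, h13.2, hXd⟩
    -- points of U avoid all lines of the triangles
    have hoff : ∀ Y ∈ U, ∀ c ∈ tri,
        Y.2 ≠ (f1 c.1 : ℝ) ∧ Y.1 ≠ (f2 c.2.1 : ℝ) ∧
          Y.1 + Y.2 ≠ (f3 c.2.2 : ℝ) := by
      rintro Y ⟨hY1, hY2, hYd⟩ c hc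
      have hb1 : |Y.1 - P.1| ≤ dist Y P := by
        rw [Prod.dist_eq, Real.dist_eq, Real.dist_eq]; exact le_max_left _ _
      have hb2 : |Y.2 - P.2| ≤ dist Y P := by
        rw [Prod.dist_eq, Real.dist_eq, Real.dist_eq]; exact le_max_right _ _
      have hδle : δ ≤ d c := le_trans (min_le_right ε₁ δ₂) (hδ₂le c hc)
      have t1 : δ ≤ (if (f1 c.1 : ℝ) = P.2 then 1 else |(f1 c.1 : ℝ) - P.2|) :=
        hδle.trans (min_le_left _ _)
      have t2 : δ ≤ (if (f2 c.2.1 : ℝ) = P.1 then 1 else |(f2 c.2.1 : ℝ) - P.1|) :=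
        hδle.trans ((min_le_right _ _).trans (min_le_left _ _))
      have t3 : δ ≤ (if (f3 c.2.2 : ℝ) = P.1 + P.2 then 1
          else |(f3 c.2.2 : ℝ) - (P.1 + P.2)| / 2) :=
        hδle.trans ((min_le_right _ _).trans (min_le_right _ _))
      refine ⟨?_, ?_, ?_⟩
      · intro hEq
        by_cases h : (f1 c.1 : ℝ) = P.2
        · rw [hEq, h] at hY1; exact lt_irrefl _ hY1
        · rw [if_neg h] at t1
          have h' : |Y.2 - P.2| < δ := lt_of_le_of_lt hb2 hYd
          rw [hEq] at h'
          exact absurd (lt_of_lt_of_le h' t1) (lt_irrefl _)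
      · intro hEq
        by_cases h : (f2 c.2.1 : ℝ) = P.1
        · have hx1 : Y.1 = P.1 := hEq.trans h
          linarith
        · rw [if_neg h] at t2
          have h' : |Y.1 - P.1| < δ := lt_of_le_of_lt hb1 hYd
          rw [hEq] at h'
          exact absurd (lt_of_lt_of_le h' t2) (lt_irrefl _)
      · intro hEq
        by_cases h : (f3 c.2.2 : ℝ) = P.1 + P.2
        · have hx1 : Y.1 + Y.2 = P.1 + P.2 := hEq.trans h
          linarith
        · rw [if_neg h] at t3
          have habs : |Y.1 + Y.2 - (P.1 + P.2)| ≤ |Y.1 - P.1| + |Y.2 - P.2| := by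
            have h0 := abs_add_le (Y.1 - P.1) (Y.2 - P.2)
            have h1 : Y.1 - P.1 + (Y.2 - P.2) = Y.1 + Y.2 - (P.1 + P.2) := by ring
            rw [h1] at h0; exact h0
          rw [hEq] at habs
          have hlt1 : |Y.1 - P.1| < δ := lt_of_le_of_lt hb1 hYd
          have hlt2 : |Y.2 - P.2| < δ := lt_of_le_of_lt hb2 hYd
          linarith
    -- U is contained in Γ
    have hUΓ : ∀ Y ∈ U, Y ∈ GammaSet tri f1 f2 f3 := by
      rintro Y hYU
      obtain ⟨hY1, hY2, hYd⟩ := hYU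
      refine ⟨hball (Metric.mem_ball.mpr (lt_of_lt_of_le hYd (min_le_left _ _))), ?_⟩
      intro hYPi
      simp only [PiSet, Set.mem_iUnion, exists_prop] at hYPi
      obtain ⟨c, hc, hmem⟩ := hYPi
      obtain ⟨hn1, hn2, hn3⟩ := hoff Y ⟨hY1, hY2, hYd⟩ c hc
      rcases hmem with (hs | hs) | hs
      · exact hn1 (seg_snd' rfl rfl hs)
      · exact hn2 (seg_fst' rfl rfl hs)
      · exact hn3 (seg_sum' (by ring) (by ring) hs)
    -- U is convex, hence preconnected
    have hUconv : Convex ℝ U := by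
      have hl1 : Convex ℝ {Y : ℝ × ℝ | Y.2 < P.2} :=
        convex_halfSpace_lt ⟨fun _ _ => rfl, fun _ _ => rfl⟩ _
      have hl2 : Convex ℝ {Y : ℝ × ℝ | P.1 + P.2 < Y.1 + Y.2} :=
        convex_halfSpace_gt
          ⟨fun u v => by simp only [Prod.fst_add, Prod.snd_add]; ring,
           fun c u => by
             simp only [Prod.smul_fst, Prod.smul_snd, smul_eq_mul]; ring⟩ _
      have hl3 : Convex ℝ (Metric.ball P δ) := convex_ball P δ
      have hEqU : U = {Y : ℝ × ℝ | Y.2 < P.2} ∩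
          ({Y : ℝ × ℝ | P.1 + P.2 < Y.1 + Y.2} ∩ Metric.ball P δ) := by
        ext Y
        simp only [hU, Set.mem_setOf_eq, Set.mem_inter_iff, Metric.mem_ball, and_assoc]
      rw [hEqU]
      exact hl1.inter (hl2.inter hl3)
    have hUpc : IsPreconnected U := hUconv.isPreconnected
    -- π is constant on U
    have hconst : ∀ Y ∈ U, ∀ c ∈ tri,
        (X ∈ interior (DeltaOf f1 f2 f3 c) ↔ Y ∈ interior (DeltaOf f1 f2 f3 c)) := by
      intro Y hY c hc
      have hVo : IsOpen (interior (DeltaOf f1 f2 f3 c)) := isOpen_interior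
      have hWo : IsOpen (DeltaOf f1 f2 f3 c)ᶜ :=
        (DeltaT_closed (f1 c.1) (f2 c.2.1) (f3 c.2.2)).isOpen_compl
      have hdisj : Disjoint (interior (DeltaOf f1 f2 f3 c)) (DeltaOf f1 f2 f3 c)ᶜ := by
        rw [Set.disjoint_iff]
        rintro p ⟨hp1, hp2⟩
        exact hp2 (interior_subset hp1)
      have hsub : U ⊆ interior (DeltaOf f1 f2 f3 c) ∪ (DeltaOf f1 f2 f3 c)ᶜ := by
        intro Z hZ
        by_cases hZΔ : Z ∈ DeltaOf f1 f2 f3 c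
        · exact Or.inl (mem_interior_DeltaT (hoff Z hZ c hc).1 (hoff Z hZ c hc).2.1
            (hoff Z hZ c hc).2.2 hZΔ)
        · exact Or.inr hZΔ
      rcases hUpc.subset_or_subset hVo hWo hdisj hsub with h | h
      · exact ⟨fun _ => h hY, fun _ => h hXU⟩
      · exact ⟨fun hx => absurd (interior_subset hx) (h hXU),
          fun hy => absurd (interior_subset hy) (h hY)⟩
    have hπconst : ∀ Y ∈ U, piCount tri f1 f2 f3 Y = piCount tri f1 f2 f3 X := by
      intro Y hY
      unfold piCount
      congr 1
      ext c
      simp only [Set.mem_setOf_eq]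
      constructor
      · rintro ⟨hc, hi⟩; exact ⟨hc, (hconst Y hY c hc).mpr hi⟩
      · rintro ⟨hc, hi⟩; exact ⟨hc, (hconst Y hY c hc).mp hi⟩
    have hUhat : U ⊆ GammaHat tri f1 f2 f3 := fun Y hY =>
      ⟨hUΓ Y hY, by rw [hπconst Y hY]; exact hπ⟩
    -- the point Q on the diagonal through P, below P, is in the closure of Γ̂
    set Q : ℝ × ℝ := (P.1 + δ/4, P.2 - δ/4) with hQ
    have hQcl : Q ∈ closure (GammaHat tri f1 f2 f3) := by
      refine closure_mono hUhat ?_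
      rw [Metric.mem_closure_iff]
      intro ε hε
      set m : ℝ := min (ε/2) (δ/4) with hm
      have hmpos : 0 < m := lt_min (by linarith) (by linarith)
      have hmle : m ≤ δ/4 := min_le_right _ _
      have hmle2 : m ≤ ε/2 := min_le_left _ _
      refine ⟨(P.1 + δ/4 + m, P.2 - δ/4), ⟨?_, ?_, ?_⟩, ?_⟩
      · show P.2 - δ/4 < P.2; linarith
      · show P.1 + P.2 < P.1 + δ/4 + m + (P.2 - δ/4); linarith
      · show dist ((P.1 + δ/4 + m, P.2 - δ/4) : ℝ × ℝ) P < δ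
        rw [Prod.dist_eq, Real.dist_eq, Real.dist_eq]
        have e1 : P.1 + δ/4 + m - P.1 = δ/4 + m := by ring
        have e2 : P.2 - δ/4 - P.2 = -(δ/4) := by ring
        rw [e1, e2, abs_of_nonneg (by linarith), abs_neg, abs_of_nonneg (by linarith)]
        exact max_lt (by linarith) (by linarith)
      · show dist Q ((P.1 + δ/4 + m, P.2 - δ/4) : ℝ × ℝ) < ε
        rw [Prod.dist_eq, Real.dist_eq, Real.dist_eq]
        have e1 : Q.1 - (P.1 + δ/4 + m) = -m := by rw [hQ]; ring
        have e2 : Q.2 - (P.2 - δ/4) = 0 := by rw [hQ]; ring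
        rw [e1, e2, abs_neg, abs_of_nonneg (by linarith), abs_zero]
        exact max_lt (by linarith) (by linarith)
    have hQne : Q ≠ P := by
      intro h
      have h2 : Q.2 = P.2 := congrArg Prod.snd h
      rw [hQ] at h2
      simp only at h2
      linarith
    have hmin := hPmin Q hQcl hQne
    unfold ptOrder at hmin
    have hQ1 : Q.1 = P.1 + δ/4 := rfl
    have hQ2 : Q.2 = P.2 - δ/4 := rfl
    rcases hmin with h | ⟨h, h'⟩
    · rw [hQ1, hQ2] at h; linarith
    · rw [hQ2] at h'; linarith
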